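/- Let C be a monoidal category with geometric realizations, and A, B, C' three associative algebras in C. If c : B → N ⊗_A M exhibits N as left dual of the (A,B)-bimodule M, and c' : C' → N' ⊗_B M' exhibits N' as left dual of the (B,C')-bimodule M', then the composite C' → N' ⊗_B M' ≅ N' ⊗_B B ⊗_B M' → N' ⊗_B N ⊗_A M ⊗_B M' exhibits N' ⊗_B N as a left dual of M ⊗_B M'. -/

import Mathlib

open CategoryTheory MonoidalCategory CategoryTheory.Limits

universe v u

namespace Paper

section GenericBicategory

open Bicategory

variable {B : Type*} [Bicategory B]

/-- Build a bicategorical adjunction from unit/counit satisfying explicit triangles. -/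
noncomputable def mkAdjOfTriangles {a b : B} {f : a ⟶ b} {g : b ⟶ a}
    (u : 𝟙 a ⟶ f ≫ g) (e : g ≫ f ⟶ 𝟙 b)
    (h1 : (Bicategory.rightUnitor g).inv ≫ g ◁ u ≫ (Bicategory.associator g f g).inv ≫ e ▷ g ≫ (Bicategory.leftUnitor g).hom = 𝟙 g)
    (h2 : (Bicategory.leftUnitor f).inv ≫ u ▷ f ≫ (Bicategory.associator f g f).hom ≫ f ◁ e ≫ (Bicategory.rightUnitor f).hom = 𝟙 f) :
    Bicategory.Adjunction f g where
  unit := u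
  counit := e
  left_triangle := by
    calc leftZigzag u e
        = (Bicategory.leftUnitor f).hom ≫ ((Bicategory.leftUnitor f).inv ≫ u ▷ f ≫ (Bicategory.associator f g f).hom ≫ f ◁ e ≫ (Bicategory.rightUnitor f).hom) ≫
            (Bicategory.rightUnitor f).inv := by bicategory
      _ = _ := by rw [h2]; simp
  right_triangle := by
    calc rightZigzag u e
        = (Bicategory.rightUnitor g).hom ≫ ((Bicategory.rightUnitor g).inv ≫ g ◁ u ≫ (Bicategory.associator g f g).inv ≫ e ▷ g ≫ (Bicategory.leftUnitor g).hom) ≫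
            (Bicategory.leftUnitor g).inv := by bicategory
      _ = _ := by rw [h1]; simp

theorem gen_exhibits_comp {a b c : B} {f₁ : a ⟶ b} {g₁ : b ⟶ a} {f₂ : b ⟶ c} {g₂ : c ⟶ b}
    (u₂ : 𝟙 b ⟶ f₂ ≫ g₂) (e₂ : g₂ ≫ f₂ ⟶ 𝟙 c)
    (u₁ : 𝟙 a ⟶ f₁ ≫ g₁) (e₁ : g₁ ≫ f₁ ⟶ 𝟙 b)
    (h1₂ : (Bicategory.rightUnitor g₂).inv ≫ g₂ ◁ u₂ ≫ (Bicategory.associator g₂ f₂ g₂).inv ≫ e₂ ▷ g₂ ≫ (Bicategory.leftUnitor g₂).hom = 𝟙 g₂)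
    (h2₂ : (Bicategory.leftUnitor f₂).inv ≫ u₂ ▷ f₂ ≫ (Bicategory.associator f₂ g₂ f₂).hom ≫ f₂ ◁ e₂ ≫ (Bicategory.rightUnitor f₂).hom = 𝟙 f₂)
    (h1₁ : (Bicategory.rightUnitor g₁).inv ≫ g₁ ◁ u₁ ≫ (Bicategory.associator g₁ f₁ g₁).inv ≫ e₁ ▷ g₁ ≫ (Bicategory.leftUnitor g₁).hom = 𝟙 g₁)
    (h2₁ : (Bicategory.leftUnitor f₁).inv ≫ u₁ ▷ f₁ ≫ (Bicategory.associator f₁ g₁ f₁).hom ≫ f₁ ◁ e₁ ≫ (Bicategory.rightUnitor f₁).hom = 𝟙 f₁) :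
    ∃ e : (g₂ ≫ g₁) ≫ f₁ ≫ f₂ ⟶ 𝟙 c,
      ((Bicategory.rightUnitor (g₂ ≫ g₁)).inv ≫
          (g₂ ≫ g₁) ◁ (u₁ ≫ f₁ ◁ (Bicategory.leftUnitor g₁).inv ≫ f₁ ◁ (u₂ ▷ g₁) ≫
            f₁ ◁ (Bicategory.associator f₂ g₂ g₁).hom ≫ (Bicategory.associator f₁ f₂ (g₂ ≫ g₁)).inv) ≫
          (Bicategory.associator (g₂ ≫ g₁) (f₁ ≫ f₂) (g₂ ≫ g₁)).inv ≫ e ▷ (g₂ ≫ g₁) ≫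
          (Bicategory.leftUnitor (g₂ ≫ g₁)).hom = 𝟙 (g₂ ≫ g₁)) ∧
      ((Bicategory.leftUnitor (f₁ ≫ f₂)).inv ≫
          (u₁ ≫ f₁ ◁ (Bicategory.leftUnitor g₁).inv ≫ f₁ ◁ (u₂ ▷ g₁) ≫
            f₁ ◁ (Bicategory.associator f₂ g₂ g₁).hom ≫ (Bicategory.associator f₁ f₂ (g₂ ≫ g₁)).inv) ▷ (f₁ ≫ f₂) ≫
          (Bicategory.associator (f₁ ≫ f₂) (g₂ ≫ g₁) (f₁ ≫ f₂)).hom ≫ (f₁ ≫ f₂) ◁ e ≫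
          (Bicategory.rightUnitor (f₁ ≫ f₂)).hom = 𝟙 (f₁ ≫ f₂)) := by
  let adj₂ := mkAdjOfTriangles u₂ e₂ h1₂ h2₂
  let adj₁ := mkAdjOfTriangles u₁ e₁ h1₁ h2₁
  let adjc := adj₁.comp adj₂
  have hU : (u₁ ≫ f₁ ◁ (Bicategory.leftUnitor g₁).inv ≫ f₁ ◁ (u₂ ▷ g₁) ≫
      f₁ ◁ (Bicategory.associator f₂ g₂ g₁).hom ≫ (Bicategory.associator f₁ f₂ (g₂ ≫ g₁)).inv) = adjc.unit := by
    dsimp only [adjc, adj₁, adj₂, Bicategory.Adjunction.comp,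
      Bicategory.Adjunction.compUnit, mkAdjOfTriangles]
    bicategory
  refine ⟨adjc.counit, ?_, ?_⟩
  · rw [hU]
    calc _ = (Bicategory.rightUnitor (g₂ ≫ g₁)).inv ≫
          rightZigzag adjc.unit adjc.counit ≫ (Bicategory.leftUnitor (g₂ ≫ g₁)).hom := by
          bicategory
      _ = 𝟙 (g₂ ≫ g₁) := by rw [adjc.right_triangle]; simp
  · rw [hU]
    calc _ = (Bicategory.leftUnitor (f₁ ≫ f₂)).inv ≫
          leftZigzag adjc.unit adjc.counit ≫ (Bicategory.rightUnitor (f₁ ≫ f₂)).hom := by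
          bicategory
      _ = 𝟙 (f₁ ≫ f₂) := by rw [adjc.left_triangle]; simp

end GenericBicategory

variable {C : Type u} [Category.{v} C] [MonoidalCategory C]
  [HasCoequalizers C]
  [∀ X : C, PreservesColimitsOfSize.{0, 0} (tensorLeft X)]
  [∀ X : C, PreservesColimitsOfSize.{0, 0} (tensorRight X)]

/-- `c : B ⟶ N ⊗_A M` exhibits `N` as a left dual of the `(A,B)`-bimodule `M`
if there is an evaluation `e : M ⊗_B N ⟶ A` such that the two triangle
identities hold. -/
noncomputable def ExhibitsLeftDual {Am Bm : Mon C} (Mb : Bimod Am Bm) (N : Bimod Bm Am)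
    (c : Bimod.regular Bm ⟶ N.tensorBimod Mb) : Prop :=
  ∃ e : Mb.tensorBimod N ⟶ Bimod.regular Am,
    ((Bimod.rightUnitorBimod Mb).inv ≫ Bimod.whiskerLeft Mb c ≫
        (Bimod.associatorBimod Mb N Mb).inv ≫ Bimod.whiskerRight e Mb ≫
        (Bimod.leftUnitorBimod Mb).hom = 𝟙 Mb) ∧
    ((Bimod.leftUnitorBimod N).inv ≫ Bimod.whiskerRight c N ≫
        (Bimod.associatorBimod N Mb N).hom ≫ Bimod.whiskerLeft N e ≫
        (Bimod.rightUnitorBimod N).hom = 𝟙 N)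

variable {Am Bm Cm : Mon C}

/-- The composite coevaluation
`C' ⟶ N' ⊗_B M' ≅ N' ⊗_B B ⊗_B M' ⟶ N' ⊗_B N ⊗_A M ⊗_B M'`
(regrouped as `(N' ⊗_B N) ⊗_A (M ⊗_B M')`). -/
noncomputable def composedCoev
    (Mb : Bimod Am Bm) (N : Bimod Bm Am) (M' : Bimod Bm Cm) (N' : Bimod Cm Bm)
    (c : Bimod.regular Bm ⟶ N.tensorBimod Mb)
    (c' : Bimod.regular Cm ⟶ N'.tensorBimod M') :
    Bimod.regular Cm ⟶ (N'.tensorBimod N).tensorBimod (Mb.tensorBimod M') :=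
  c' ≫ Bimod.whiskerLeft N' (Bimod.leftUnitorBimod M').inv ≫
    Bimod.whiskerLeft N' (Bimod.whiskerRight c M') ≫
    Bimod.whiskerLeft N' (Bimod.associatorBimod N Mb M').hom ≫
    (Bimod.associatorBimod N' N (Mb.tensorBimod M')).inv

section Inst
attribute [local instance] Bimod.monBicategory

/-- **Composition of dual pairs of bimodules** (Lurie 4.6.2.6).  If
`c : B ⟶ N ⊗_A M` exhibits `N` as a left dual of the `(A,B)`-bimodule `M`,
and `c' : C' ⟶ N' ⊗_B M'` exhibits `N'` as a left dual of the
`(B,C')`-bimodule `M'`, then the composite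
`C' ⟶ N' ⊗_B M' ≅ N' ⊗_B B ⊗_B M' ⟶ N' ⊗_B N ⊗_A M ⊗_B M'`
exhibits `N' ⊗_B N` as a left dual of `M ⊗_B M'`. -/
theorem exhibitsLeftDual_comp
    (Mb : Bimod Am Bm) (N : Bimod Bm Am) (M' : Bimod Bm Cm) (N' : Bimod Cm Bm)
    (c : Bimod.regular Bm ⟶ N.tensorBimod Mb)
    (c' : Bimod.regular Cm ⟶ N'.tensorBimod M')
    (hc : ExhibitsLeftDual Mb N c) (hc' : ExhibitsLeftDual M' N' c') :
    ExhibitsLeftDual (Mb.tensorBimod M') (N'.tensorBimod N)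
      (composedCoev Mb N M' N' c c') := by
  obtain ⟨e, h1, h2⟩ := hc
  obtain ⟨e', h1', h2'⟩ := hc'
  exact gen_exhibits_comp (B := Mon C) (a := Cm) (b := Bm) (c := Am)
    (f₁ := N') (g₁ := M') (f₂ := N) (g₂ := Mb) c e c' e' h1 h2 h1' h2'

end Inst

end Paper
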